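/- arXiv:2308.13907 — 4 statements merged into one kernel-verified Lean document; each statement's English description precedes it below -/
import Mathlib

section
/- Let E be a Banach space and let (α_g)_{g∈G} be a family of linear contractions on E indexed by an amenable locally compact second countable semigroup G with left-right invariant measure m and a Følner sequence (K_n), satisfying α_g ∘ α_h = α_{gh} and continuity of g ↦ α_g(ξ) for each ξ. Define A_n(ξ) = (1/m(K_n)) ∫_{K_n} α_g(ξ) dm(g). Then the following are equivalent: (1) for every ξ ∈ E there exists a fixed point ξ̄ ∈ E^G with lim_n A_n ξ = ξ̄ in norm; (2) for every ξ ∈ E there exist ξ̄ ∈ E^G and a subsequence (n_k) with A_{n_k} ξ → ξ̄ weakly; (3) for every ξ ∈ E, E^G ∩ weak-closure of conv{α_g ξ : g ∈ G} is nonempty; (4) for every ξ ∈ E, E^G ∩ norm-closure of conv{α_g ξ : g ∈ G} is nonempty. -/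
open MeasureTheory Filter Topology

/-- The Følner ergodic averages `A_n(ξ) = (1/m(K_n)) ∫_{K_n} α_g ξ dm(g)`. -/
noncomputable def ergAvg {E : Type*} [NormedAddCommGroup E] [NormedSpace ℝ E]
    {G : Type*} [MeasurableSpace G] (m : Measure G) (K : ℕ → Set G)
    (α : G → E →L[ℝ] E) (n : ℕ) (ξ : E) : E :=
  (m (K n)).toReal⁻¹ • ∫ g in K n, α g ξ ∂m

/-- Membership in the weak closure of a set `S ⊆ E`. -/
def InWeakClosure {E : Type*} [NormedAddCommGroup E] [NormedSpace ℝ E]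
    (S : Set E) (x : E) : Prop :=
  ∀ (s : Finset (E →L[ℝ] ℝ)) (ε : ℝ), 0 < ε → ∃ y ∈ S, ∀ Λ ∈ s, |Λ x - Λ y| < ε

open scoped ENNReal

section MetAux

set_option linter.unusedSectionVars false

/-! ### Measure transport inequalities -/

variable {G : Type*} [MeasurableSpace G] {m : Measure G}

private lemma met_transport_le (T : G → G) (hT : ∀ B : Set G, m (T '' B) = m B) (A S : Set G) :
    m (A ∩ T ⁻¹' S) ≤ m (A ∩ S) + m ((T '' A) \ A) := by
  rw [← hT (A ∩ T ⁻¹' S)]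
  have h1 : T '' (A ∩ T ⁻¹' S) ⊆ (A ∩ S) ∪ ((T '' A) \ A) := by
    rw [Set.image_inter_preimage]
    rintro x ⟨hxA, hxS⟩
    by_cases hx : x ∈ A
    · exact Or.inl ⟨hx, hxS⟩
    · exact Or.inr ⟨hxA, hx⟩
  exact (measure_mono h1).trans (measure_union_le _ _)

private lemma met_transport_ge (T : G → G) (hT : ∀ B : Set G, m (T '' B) = m B) {A S : Set G}
    (hA : MeasurableSet A) (hAfin : m A ≠ ⊤) (hS : MeasurableSet S)
    (hTS : MeasurableSet (T ⁻¹' S)) :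
    m (A ∩ S) ≤ m (A ∩ T ⁻¹' S) + m ((T '' A) \ A) := by
  set δ := m ((T '' A) \ A) with hδ
  have h1 : m (A ∩ T ⁻¹' Sᶜ) ≤ m (A ∩ Sᶜ) + δ := met_transport_le T hT A Sᶜ
  rw [Set.preimage_compl] at h1
  have e1 : m (A ∩ S) + m (A \ S) = m A := measure_inter_add_diff A hS
  have e2 : m (A ∩ T ⁻¹' S) + m (A \ T ⁻¹' S) = m A := measure_inter_add_diff A hTS
  have hfin : m (A \ T ⁻¹' S) ≠ ⊤ := ((measure_mono Set.diff_subset).trans_lt hAfin.lt_top).ne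
  rw [← ENNReal.add_le_add_iff_right hfin]
  have : m (A ∩ S) + m (A \ T ⁻¹' S) ≤ m (A ∩ S) + (m (A \ S) + δ) := by
    gcongr
    rw [Set.diff_eq, Set.diff_eq] at *
    exact h1
  refine this.trans ?_
  rw [← add_assoc, e1, ← e2]
  ring_nf
  exact le_of_eq (by ring)

end MetAux

section MetLint

set_option linter.unusedSectionVars false

variable {G : Type*} [MeasurableSpace G] [TopologicalSpace G] [BorelSpace G] {m : Measure G}

/-- Comparison of set integrals of two bounded continuous functions whose superlevel
sets have comparable measures (a layer-cake argument). -/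
private lemma met_lint_cmp {u v : G → ℝ} (hu : Continuous u) (hv : Continuous v) {c : ℝ}
    (hc : 0 ≤ c)
    (hu0 : ∀ g, 0 ≤ u g) (hu2 : ∀ g, u g ≤ 2 * c) (hv0 : ∀ g, 0 ≤ v g) (hv2 : ∀ g, v g ≤ 2 * c)
    {A : Set G} (hA : MeasurableSet A) (hAfin : m A ≠ ⊤) {δ : ℝ≥0∞} (hδ : δ ≠ ⊤)
    (hlev : ∀ t : ℝ, m (A ∩ {g | t < v g}) ≤ m (A ∩ {g | t < u g}) + δ) :
    ∫ g in A, v g ∂m ≤ (∫ g in A, u g ∂m) + δ.toReal * (2 * c) := by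
  set μ := m.restrict A with hμ
  haveI : IsFiniteMeasure μ := ⟨by rw [hμ, Measure.restrict_apply_univ]; exact hAfin.lt_top⟩
  have humeas : ∀ t : ℝ, MeasurableSet {g | t < u g} :=
    fun t => measurableSet_lt measurable_const hu.measurable
  have hvmeas : ∀ t : ℝ, MeasurableSet {g | t < v g} :=
    fun t => measurableSet_lt measurable_const hv.measurable
  have hru : ∀ t : ℝ, μ {g | t < u g} = m (A ∩ {g | t < u g}) := fun t => by
    rw [hμ, Measure.restrict_apply (humeas t), Set.inter_comm]
  have hrv : ∀ t : ℝ, μ {g | t < v g} = m (A ∩ {g | t < v g}) := fun t => by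
    rw [hμ, Measure.restrict_apply (hvmeas t), Set.inter_comm]
  have keyu : ∫⁻ g, ENNReal.ofReal (u g) ∂μ = ∫⁻ t in Set.Ioi 0, μ {g | t < u g} :=
    lintegral_eq_lintegral_meas_lt μ (Filter.Eventually.of_forall hu0) hu.aemeasurable
  have keyv : ∫⁻ g, ENNReal.ofReal (v g) ∂μ = ∫⁻ t in Set.Ioi 0, μ {g | t < v g} :=
    lintegral_eq_lintegral_meas_lt μ (Filter.Eventually.of_forall hv0) hv.aemeasurable
  have hLu_fin : ∫⁻ g, ENNReal.ofReal (u g) ∂μ ≠ ⊤ := by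
    refine ne_top_of_le_ne_top ?_ (lintegral_mono fun g => ENNReal.ofReal_le_ofReal (hu2 g))
    rw [lintegral_const]
    exact ENNReal.mul_ne_top ENNReal.ofReal_ne_top (measure_ne_top μ _)
  have hbound : ∀ᵐ t ∂(volume.restrict (Set.Ioi (0:ℝ))),
      μ {g | t < v g} ≤ μ {g | t < u g} + (Set.Ioc (0:ℝ) (2*c)).indicator (fun _ => δ) t := by
    filter_upwards [ae_restrict_mem measurableSet_Ioi] with t ht
    by_cases h2 : t ≤ 2 * c
    · rw [Set.indicator_of_mem (Set.mem_Ioc.mpr ⟨ht, h2⟩)]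
      rw [hru, hrv]
      exact hlev t
    · have : {g | t < v g} = ∅ := by
        ext g; simp only [Set.mem_setOf_eq, Set.mem_empty_iff_false, iff_false, not_lt]
        exact (hv2 g).trans (not_le.1 h2).le
      rw [this]
      simp
  have hstep : ∫⁻ t in Set.Ioi (0:ℝ), μ {g | t < v g} ≤
      (∫⁻ t in Set.Ioi (0:ℝ), μ {g | t < u g}) + δ * ENNReal.ofReal (2 * c) := by
    calc ∫⁻ t in Set.Ioi (0:ℝ), μ {g | t < v g}
        ≤ ∫⁻ t in Set.Ioi (0:ℝ),
            (μ {g | t < u g} + (Set.Ioc (0:ℝ) (2*c)).indicator (fun _ => δ) t) :=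
          lintegral_mono_ae hbound
      _ = (∫⁻ t in Set.Ioi (0:ℝ), μ {g | t < u g}) +
            ∫⁻ t in Set.Ioi (0:ℝ), (Set.Ioc (0:ℝ) (2*c)).indicator (fun _ => δ) t :=
          lintegral_add_right _ (measurable_const.indicator measurableSet_Ioc)
      _ = (∫⁻ t in Set.Ioi (0:ℝ), μ {g | t < u g}) + δ * ENNReal.ofReal (2 * c) := by
          congr 1
          rw [lintegral_indicator measurableSet_Ioc, setLIntegral_const,
            Measure.restrict_apply measurableSet_Ioc]
          have : Set.Ioc (0:ℝ) (2*c) ∩ Set.Ioi 0 = Set.Ioc 0 (2*c) := by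
            rw [Set.inter_eq_left]; exact fun x hx => hx.1
          rw [this, Real.volume_Ioc]
          norm_num
  have hiu : ∫ g in A, u g ∂m = (∫⁻ g, ENNReal.ofReal (u g) ∂μ).toReal := by
    rw [hμ] at *
    exact integral_eq_lintegral_of_nonneg_ae (Filter.Eventually.of_forall hu0)
      hu.aestronglyMeasurable
  have hiv : ∫ g in A, v g ∂m = (∫⁻ g, ENNReal.ofReal (v g) ∂μ).toReal := by
    rw [hμ] at *
    exact integral_eq_lintegral_of_nonneg_ae (Filter.Eventually.of_forall hv0)
      hv.aestronglyMeasurable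
  rw [hiu, hiv, keyu, keyv]
  have hfin2 : (∫⁻ t in Set.Ioi (0:ℝ), μ {g | t < u g}) + δ * ENNReal.ofReal (2*c) ≠ ⊤ := by
    rw [← keyu]
    exact ENNReal.add_ne_top.2 ⟨hLu_fin, ENNReal.mul_ne_top hδ ENNReal.ofReal_ne_top⟩
  refine (ENNReal.toReal_mono hfin2 hstep).trans ?_
  rw [ENNReal.toReal_add (by rw [← keyu]; exact hLu_fin)
    (ENNReal.mul_ne_top hδ ENNReal.ofReal_ne_top), ENNReal.toReal_mul,
    ENNReal.toReal_ofReal (by positivity)]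

end MetLint

section MetMain

set_option linter.unusedSectionVars false

variable {E : Type*} [NormedAddCommGroup E] [NormedSpace ℝ E] [CompleteSpace E]
    {G : Type*} [Semigroup G] [TopologicalSpace G] [T2Space G] [SecondCountableTopology G]
    [MeasurableSpace G] [BorelSpace G]
    {m : Measure G} {K : ℕ → Set G} {α : G → E →L[ℝ] E}

variable (hcontr : ∀ g : G, ‖α g‖ ≤ 1) (hcont : ∀ ξ : E, Continuous fun g => α g ξ)

include hcontr in
private lemma met_norm_apply_le (g : G) (ζ : E) : ‖α g ζ‖ ≤ ‖ζ‖ := by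
  calc ‖α g ζ‖ ≤ ‖α g‖ * ‖ζ‖ := (α g).le_opNorm ζ
  _ ≤ 1 * ‖ζ‖ := mul_le_mul_of_nonneg_right (hcontr g) (norm_nonneg ζ)
  _ = ‖ζ‖ := one_mul _

include hcontr hcont in
private lemma met_integ_on (ζ : E) {A : Set G} (hAfin : m A ≠ ⊤) :
    IntegrableOn (fun g => α g ζ) A m := by
  haveI : IsFiniteMeasure (m.restrict A) :=
    ⟨by rw [Measure.restrict_apply_univ]; exact hAfin.lt_top⟩
  exact Integrable.mono' (integrable_const ‖ζ‖) ((hcont ζ).aestronglyMeasurable)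
    (Filter.Eventually.of_forall fun g => met_norm_apply_le hcontr g ζ)

include hcontr hcont in
/-- The key estimate: the difference between the Følner average of the orbit of `ξ` and that
of `α h ξ` is controlled by the measure of `((· * h) '' A) \ A`. -/
private lemma met_key_bound
    (hminv : ∀ (g : G) (B : Set G), m ((g * ·) '' B) = m B ∧ m ((· * g) '' B) = m B)
    (hact : ∀ g h : G, (α g).comp (α h) = α (g * h))
    {A : Set G} (hA : MeasurableSet A) (hAfin : m A ≠ ⊤) (ξ : E) (h : G) :
    ‖(∫ g in A, α g ξ ∂m) - ∫ g in A, α g (α h ξ) ∂m‖ ≤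
      2 * ‖ξ‖ * (m (((· * h) '' A) \ A)).toReal := by
  haveI : IsFiniteMeasure (m.restrict A) :=
    ⟨by rw [Measure.restrict_apply_univ]; exact hAfin.lt_top⟩
  set T : G → G := (· * h) with hT
  have hTm : ∀ B : Set G, m (T '' B) = m B := fun B => (hminv h B).2
  set δ := m ((T '' A) \ A) with hδdef
  have hδfin : δ ≠ ⊤ := by
    refine ne_top_of_le_ne_top ?_ (measure_mono Set.diff_subset)
    rw [hTm A]; exact hAfin
  set v0 := (∫ g in A, α g ξ ∂m) - ∫ g in A, α g (α h ξ) ∂m with hv0def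
  rcases eq_or_ne v0 0 with h0 | h0
  · rw [h0, norm_zero]; positivity
  obtain ⟨Λ, hΛ1, hΛv⟩ := exists_dual_vector ℝ v0 (norm_ne_zero_iff.2 h0)
  have Λabs : ∀ x : E, |Λ x| ≤ ‖x‖ := fun x => by
    calc |Λ x| = ‖Λ x‖ := rfl
    _ ≤ ‖Λ‖ * ‖x‖ := Λ.le_opNorm x
    _ = ‖x‖ := by rw [hΛ1, one_mul]
  set c := ‖ξ‖ with hc
  set u : G → ℝ := fun g => Λ (α g ξ) + c with hu
  set v : G → ℝ := fun g => Λ (α g (α h ξ)) + c with hv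
  have hucont : Continuous u := (Λ.continuous.comp (hcont ξ)).add continuous_const
  have hvcont : Continuous v := (Λ.continuous.comp (hcont (α h ξ))).add continuous_const
  have hub : ∀ g : G, |Λ (α g ξ)| ≤ c := fun g =>
    (Λabs _).trans (met_norm_apply_le hcontr g ξ)
  have hvb : ∀ g : G, |Λ (α g (α h ξ))| ≤ c := fun g =>
    (Λabs _).trans ((met_norm_apply_le hcontr g _).trans (met_norm_apply_le hcontr h ξ))
  have hu0 : ∀ g, 0 ≤ u g := fun g => by have := abs_le.1 (hub g); simp only [hu]; linarith
  have hu2 : ∀ g, u g ≤ 2 * c := fun g => by have := abs_le.1 (hub g); simp only [hu]; linarith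
  have hv0 : ∀ g, 0 ≤ v g := fun g => by have := abs_le.1 (hvb g); simp only [hv]; linarith
  have hv2 : ∀ g, v g ≤ 2 * c := fun g => by have := abs_le.1 (hvb g); simp only [hv]; linarith
  have hcomp : ∀ g : G, α g (α h ξ) = α (g * h) ξ := fun g => by
    rw [← hact g h]; rfl
  have hlev_vu : ∀ t : ℝ, {g | t < v g} = T ⁻¹' {g | t < u g} := fun t => by
    ext g
    simp only [Set.mem_setOf_eq, Set.mem_preimage, hu, hv, hT, hcomp g]
  have hlev1 : ∀ t : ℝ, m (A ∩ {g | t < v g}) ≤ m (A ∩ {g | t < u g}) + δ := fun t => by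
    rw [hlev_vu t]; exact met_transport_le T hTm A _
  have hlev2 : ∀ t : ℝ, m (A ∩ {g | t < u g}) ≤ m (A ∩ {g | t < v g}) + δ := fun t => by
    rw [hlev_vu t]
    exact met_transport_ge T hTm hA hAfin (measurableSet_lt measurable_const hucont.measurable)
      (by rw [← hlev_vu t]; exact measurableSet_lt measurable_const hvcont.measurable)
  have hcnn : (0:ℝ) ≤ c := norm_nonneg ξ
  have I2 : ∫ g in A, u g ∂m ≤ (∫ g in A, v g ∂m) + δ.toReal * (2 * c) :=
    met_lint_cmp hvcont hucont hcnn hv0 hv2 hu0 hu2 hA hAfin hδfin hlev2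
  have hint1 : IntegrableOn (fun g => Λ (α g ξ)) A m :=
    Λ.integrable_comp (met_integ_on hcontr hcont ξ hAfin)
  have hint2 : IntegrableOn (fun g => Λ (α g (α h ξ))) A m :=
    Λ.integrable_comp (met_integ_on hcontr hcont (α h ξ) hAfin)
  have hiu : ∫ g in A, u g ∂m = (∫ g in A, Λ (α g ξ) ∂m) + (m A).toReal • c := by
    rw [hu]
    rw [integral_add hint1 (integrable_const c), setIntegral_const]
    rfl
  have hiv : ∫ g in A, v g ∂m = (∫ g in A, Λ (α g (α h ξ)) ∂m) + (m A).toReal • c := by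
    rw [hv]
    rw [integral_add hint2 (integrable_const c), setIntegral_const]
    rfl
  have hnorm : ‖v0‖ = (∫ g in A, Λ (α g ξ) ∂m) - ∫ g in A, Λ (α g (α h ξ)) ∂m := by
    have : Λ v0 = (∫ g in A, Λ (α g ξ) ∂m) - ∫ g in A, Λ (α g (α h ξ)) ∂m := by
      rw [hv0def, map_sub, Λ.integral_comp_comm (met_integ_on hcontr hcont ξ hAfin),
        Λ.integral_comp_comm (met_integ_on hcontr hcont (α h ξ) hAfin)]
    rw [← this, hΛv]; rfl
  have : ‖v0‖ ≤ δ.toReal * (2 * c) := by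
    rw [hnorm]
    have := hiu ▸ hiv ▸ I2
    linarith
  calc ‖v0‖ ≤ δ.toReal * (2 * c) := this
  _ = 2 * ‖ξ‖ * δ.toReal := by rw [hc]; ring

variable (hKmeas : ∀ n, MeasurableSet (K n))
    (hKpos : ∀ n, 0 < m (K n)) (hKfin : ∀ n, m (K n) < ⊤)

include hKfin hcontr hcont in
private lemma met_ergAvg_norm_le (ζ : E) (n : ℕ) : ‖ergAvg m K α n ζ‖ ≤ ‖ζ‖ := by
  haveI : IsFiniteMeasure (m.restrict (K n)) :=
    ⟨by rw [Measure.restrict_apply_univ]; exact hKfin n⟩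
  have h1 : ‖∫ g in K n, α g ζ ∂m‖ ≤ ‖ζ‖ * (m.restrict (K n) Set.univ).toReal :=
    norm_integral_le_of_norm_le_const
      (Filter.Eventually.of_forall fun g => met_norm_apply_le hcontr g ζ)
  rw [ergAvg, norm_smul, Real.norm_eq_abs, abs_of_nonneg (by positivity)]
  rw [Measure.restrict_apply_univ] at h1
  calc (m (K n)).toReal⁻¹ * ‖∫ g in K n, α g ζ ∂m‖
      ≤ (m (K n)).toReal⁻¹ * (‖ζ‖ * (m (K n)).toReal) := by gcongr
  _ ≤ ‖ζ‖ := by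
      rcases eq_or_ne ((m (K n)).toReal) 0 with h | h
      · simp [h]
      · rw [mul_comm ‖ζ‖, ← mul_assoc, inv_mul_cancel₀ h, one_mul]

include hKfin hcontr hcont in
private lemma met_ergAvg_sub (a b : E) (n : ℕ) :
    ergAvg m K α n (a - b) = ergAvg m K α n a - ergAvg m K α n b := by
  rw [ergAvg, ergAvg, ergAvg, ← smul_sub]
  congr 1
  rw [← integral_sub (met_integ_on hcontr hcont a (hKfin n).ne)
    (met_integ_on hcontr hcont b (hKfin n).ne)]
  simp [map_sub]

include hKfin hcontr hcont in
private lemma met_ergAvg_smul_add (c d : ℝ) (a b : E) (n : ℕ) :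
    ergAvg m K α n (c • a + d • b) = c • ergAvg m K α n a + d • ergAvg m K α n b := by
  simp only [ergAvg]
  rw [← smul_comm ((m (K n)).toReal⁻¹) c, ← smul_comm ((m (K n)).toReal⁻¹) d, ← smul_add]
  congr 1
  have hab : ∀ g : G, α g (c • a + d • b) = c • α g a + d • α g b := fun g => by
    rw [map_add, _root_.map_smul, _root_.map_smul]
  simp_rw [hab]
  have h1 : Integrable (fun g => c • α g a) (m.restrict (K n)) :=
    (met_integ_on hcontr hcont a (hKfin n).ne).smul c
  have h2 : Integrable (fun g => d • α g b) (m.restrict (K n)) :=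
    (met_integ_on hcontr hcont b (hKfin n).ne).smul d
  rw [integral_add h1 h2, integral_smul, integral_smul]

include hKpos hKfin in
private lemma met_ergAvg_fixed {ζ : E} (hζ : ∀ g : G, α g ζ = ζ) (n : ℕ) :
    ergAvg m K α n ζ = ζ := by
  have h0 : ((m (K n)).toReal) ≠ 0 :=
    ENNReal.toReal_ne_zero.2 ⟨(hKpos n).ne', (hKfin n).ne⟩
  simp only [ergAvg, hζ]
  rw [setIntegral_const, smul_smul, Measure.real, inv_mul_cancel₀ h0, one_smul]

include hKpos hKfin hcontr hcont in
private lemma met_ergAvg_mem_closure_hull (ξ : E) (n : ℕ) :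
    ergAvg m K α n ξ ∈ closure (convexHull ℝ (Set.range fun g : G => α g ξ)) := by
  have h := Convex.set_average_mem (μ := m) (t := K n)
    (convex_convexHull ℝ (Set.range fun g : G => α g ξ)).closure isClosed_closure
    (hKpos n).ne' (hKfin n).ne
    (f := fun g => α g ξ)
    (by filter_upwards with g; exact subset_closure (subset_convexHull ℝ _ ⟨g, rfl⟩))
    (met_integ_on hcontr hcont ξ (hKfin n).ne)
  rwa [setAverage_eq] at h

include hKmeas hKpos hKfin hcontr hcont in
private lemma met_ergAvg_action_tendsto
    (hminv : ∀ (g : G) (B : Set G), m ((g * ·) '' B) = m B ∧ m ((· * g) '' B) = m B)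
    (hact : ∀ g h : G, (α g).comp (α h) = α (g * h))
    (hFolR : ∀ g : G,
      Tendsto (fun n => m (symmDiff (K n) ((· * g) '' K n)) / m (K n)) atTop (nhds 0))
    (ξ : E) (h : G) :
    Tendsto (fun n => ergAvg m K α n ξ - ergAvg m K α n (α h ξ)) atTop (𝓝 0) := by
  set r : ℕ → ℝ := fun n => (m (symmDiff (K n) ((· * h) '' K n)) / m (K n)).toReal with hr
  have hr0 : Tendsto r atTop (𝓝 0) := by
    have := (ENNReal.tendsto_toReal (a := 0) (by simp)).comp (hFolR h)
    simpa only [hr, Function.comp_def, ENNReal.toReal_zero] using this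
  have hbnd : ∀ n, ‖ergAvg m K α n ξ - ergAvg m K α n (α h ξ)‖ ≤ 2 * ‖ξ‖ * r n := by
    intro n
    have hkb := met_key_bound hcontr hcont hminv hact (hKmeas n) (hKfin n).ne ξ h
    rw [ergAvg, ergAvg, ← smul_sub, norm_smul, Real.norm_eq_abs, abs_of_nonneg (by positivity)]
    set δ := m (((· * h) '' K n) \ K n) with hδ
    have hTK : m ((· * h) '' K n) = m (K n) := (hminv h (K n)).2
    have hsdne : m (symmDiff (K n) ((· * h) '' K n)) ≠ ⊤ := by
      refine ne_top_of_le_ne_top (b := m (K n) + m (K n)) ?_ ?_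
      · exact (ENNReal.add_lt_top.2 ⟨hKfin n, hKfin n⟩).ne
      · rw [symmDiff_def]
        refine (measure_union_le _ _).trans ?_
        exact add_le_add (measure_mono Set.diff_subset)
          ((measure_mono Set.diff_subset).trans hTK.le)
    calc (m (K n)).toReal⁻¹ * ‖(∫ g in K n, α g ξ ∂m) - ∫ g in K n, α g (α h ξ) ∂m‖
        ≤ (m (K n)).toReal⁻¹ * (2 * ‖ξ‖ * δ.toReal) :=
          mul_le_mul_of_nonneg_left hkb (by positivity)
      _ = 2 * ‖ξ‖ * (δ / m (K n)).toReal := by rw [ENNReal.toReal_div]; ring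
      _ ≤ 2 * ‖ξ‖ * r n := by
          refine mul_le_mul_of_nonneg_left ?_ (by positivity)
          refine ENNReal.toReal_mono (ENNReal.div_lt_top hsdne (hKpos n).ne').ne ?_
          refine ENNReal.div_le_div_right (measure_mono ?_) _
          rw [symmDiff_def]
          exact fun x hx => Or.inr hx
  refine squeeze_zero_norm hbnd ?_
  simpa only [mul_zero] using hr0.const_mul (2 * ‖ξ‖)

end MetMain

/-- **Mean ergodic theorem.** For a contraction action of an amenable LCSH semigroup `G`
with left-right invariant measure `m` and Følner sequence `(K_n)` on a Banach space `E`,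
the four statements (norm convergence of the averages to a fixed point; weak subsequential
convergence to a fixed point; existence of a fixed point in the weak closure of the orbit's
convex hull; the same with the norm closure) are equivalent. -/
theorem mean_ergodic_theorem_tfae
    {E : Type*} [NormedAddCommGroup E] [NormedSpace ℝ E] [CompleteSpace E]
    {G : Type*} [Semigroup G] [TopologicalSpace G] [T2Space G]
    [SecondCountableTopology G] [LocallyCompactSpace G]
    [MeasurableSpace G] [BorelSpace G]
    (m : Measure G) [SigmaFinite m]
    (hminv : ∀ (g : G) (B : Set G), m ((g * ·) '' B) = m B ∧ m ((· * g) '' B) = m B)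
    (K : ℕ → Set G) (hKmeas : ∀ n, MeasurableSet (K n))
    (hKpos : ∀ n, 0 < m (K n)) (hKfin : ∀ n, m (K n) < ⊤)
    (hFolR : ∀ g : G,
      Tendsto (fun n => m (symmDiff (K n) ((· * g) '' K n)) / m (K n)) atTop (nhds 0))
    (hFolL : ∀ g : G,
      Tendsto (fun n => m (symmDiff (K n) ((g * ·) '' K n)) / m (K n)) atTop (nhds 0))
    (α : G → E →L[ℝ] E)
    (hact : ∀ g h : G, (α g).comp (α h) = α (g * h))
    (hcontr : ∀ g : G, ‖α g‖ ≤ 1)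
    (hcont : ∀ ξ : E, Continuous fun g => α g ξ) :
    List.TFAE
      [ -- (1) norm convergence of the ergodic averages to a fixed point
        ∀ ξ : E, ∃ ξ' : E, (∀ g : G, α g ξ' = ξ') ∧
          Tendsto (fun n => ergAvg m K α n ξ) atTop (nhds ξ'),
        -- (2) weak convergence along a subsequence to a fixed point
        ∀ ξ : E, ∃ ξ' : E, (∀ g : G, α g ξ' = ξ') ∧
          ∃ nk : ℕ → ℕ, StrictMono nk ∧
            ∀ Λ : E →L[ℝ] ℝ,
              Tendsto (fun k => Λ (ergAvg m K α (nk k) ξ)) atTop (nhds (Λ ξ')),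
        -- (3) a fixed point in the weak closure of the convex hull of the orbit
        ∀ ξ : E, ∃ ξ' : E, (∀ g : G, α g ξ' = ξ') ∧
          InWeakClosure (convexHull ℝ (Set.range fun g : G => α g ξ)) ξ',
        -- (4) a fixed point in the norm closure of the convex hull of the orbit
        ∀ ξ : E, ∃ ξ' : E, (∀ g : G, α g ξ' = ξ') ∧
          ξ' ∈ closure (convexHull ℝ (Set.range fun g : G => α g ξ)) ] := by
  tfae_have 1 → 2 := by
    intro h1 ξ
    obtain ⟨ξ', hfix, htend⟩ := h1 ξ
    exact ⟨ξ', hfix, id, strictMono_id, fun Λ => (Λ.continuous.tendsto ξ').comp htend⟩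
  tfae_have 2 → 3 := by
    intro h2 ξ
    obtain ⟨ξ', hfix, nk, hnk, hw⟩ := h2 ξ
    refine ⟨ξ', hfix, ?_⟩
    intro s ε hε
    set M : ℝ := 1 + ∑ Λ ∈ s, ‖Λ‖ with hM
    have hsum : (0:ℝ) ≤ ∑ Λ ∈ s, ‖Λ‖ := Finset.sum_nonneg fun i _ => norm_nonneg i
    have hM0 : 0 < M := by positivity
    have hMle : ∀ Λ ∈ s, ‖Λ‖ ≤ M := by
      intro Λ hΛ
      have := Finset.single_le_sum (f := fun Λ : E →L[ℝ] ℝ => ‖Λ‖)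
        (fun i _ => norm_nonneg i) hΛ
      simp only [hM]; linarith
    have hev : ∀ᶠ k in atTop, ∀ Λ ∈ s, |Λ (ergAvg m K α (nk k) ξ) - Λ ξ'| < ε / 2 := by
      rw [eventually_all_finset]
      intro Λ hΛ
      have h1 := (hw Λ).sub_const (Λ ξ')
      rw [sub_self] at h1
      have h2 := NormedAddCommGroup.tendsto_nhds_zero.1 h1 (ε / 2) (half_pos hε)
      filter_upwards [h2] with k hk
      rwa [Real.norm_eq_abs] at hk
    obtain ⟨k, hk⟩ := hev.exists
    have ha : ergAvg m K α (nk k) ξ ∈ closure (convexHull ℝ (Set.range fun g : G => α g ξ)) :=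
      met_ergAvg_mem_closure_hull hcontr hcont hKpos hKfin ξ (nk k)
    obtain ⟨y, hy, hdy⟩ := Metric.mem_closure_iff.1 ha (ε / (2 * M)) (by positivity)
    refine ⟨y, hy, ?_⟩
    intro Λ hΛ
    have h1 := hk Λ hΛ
    have h2 : |Λ (ergAvg m K α (nk k) ξ) - Λ y| ≤ ε / 2 := by
      calc |Λ (ergAvg m K α (nk k) ξ) - Λ y| = ‖Λ (ergAvg m K α (nk k) ξ - y)‖ := by
            rw [map_sub]; exact (Real.norm_eq_abs _).symm
      _ ≤ ‖Λ‖ * ‖ergAvg m K α (nk k) ξ - y‖ := Λ.le_opNorm _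
      _ ≤ M * (ε / (2 * M)) := by
          refine mul_le_mul (hMle Λ hΛ) ?_ (norm_nonneg _) hM0.le
          rw [← dist_eq_norm]; exact hdy.le
      _ = ε / 2 := by field_simp
    calc |Λ ξ' - Λ y| ≤ |Λ ξ' - Λ (ergAvg m K α (nk k) ξ)| + |Λ (ergAvg m K α (nk k) ξ) - Λ y| :=
          abs_sub_le _ _ _
    _ < ε / 2 + ε / 2 := by
        refine add_lt_add_of_lt_of_le ?_ h2
        rw [abs_sub_comm]; exact h1
    _ = ε := by ring
  tfae_have 3 → 4 := by
    intro h3 ξ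
    obtain ⟨ξ', hfix, hwk⟩ := h3 ξ
    refine ⟨ξ', hfix, ?_⟩
    by_contra hnot
    obtain ⟨f, u, hfu, hub⟩ := geometric_hahn_banach_point_closed
      (convex_convexHull ℝ (Set.range fun g : G => α g ξ)).closure isClosed_closure hnot
    obtain ⟨y, hy, hyf⟩ := hwk {f} (u - f ξ') (by linarith)
    have h1 := hyf f (Finset.mem_singleton_self f)
    have h2 : u < f y := hub y (subset_closure hy)
    rw [abs_sub_lt_iff] at h1
    linarith [h1.2]
  tfae_have 4 → 1 := by
    intro h4 ξ
    obtain ⟨ξ', hfix, hcl⟩ := h4 ξ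
    refine ⟨ξ', hfix, ?_⟩
    set C : Set E :=
      {ζ : E | Tendsto (fun n => ergAvg m K α n ξ - ergAvg m K α n ζ) atTop (𝓝 0)} with hC
    have hCconv : Convex ℝ C := by
      rintro x hx y hy a b ha hb hab
      simp only [hC, Set.mem_setOf_eq] at hx hy ⊢
      have heq : ∀ n, ergAvg m K α n ξ - ergAvg m K α n (a • x + b • y)
          = a • (ergAvg m K α n ξ - ergAvg m K α n x)
            + b • (ergAvg m K α n ξ - ergAvg m K α n y) := by
        intro n
        rw [met_ergAvg_smul_add hcontr hcont hKfin a b x y n, smul_sub, smul_sub]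
        have h1 : a • ergAvg m K α n ξ + b • ergAvg m K α n ξ = ergAvg m K α n ξ := by
          rw [← add_smul, hab, one_smul]
        conv_lhs => rw [← h1]
        abel
      simp only [heq]
      have := (hx.const_smul a).add (hy.const_smul b)
      simpa using this
    have hCclosed : IsClosed C := by
      refine isClosed_of_closure_subset ?_
      intro ζ hζ
      simp only [hC, Set.mem_setOf_eq]
      rw [NormedAddCommGroup.tendsto_nhds_zero]
      intro ε hε
      obtain ⟨ζ', hζ'C, hdist⟩ := Metric.mem_closure_iff.1 hζ (ε / 2) (by positivity)
      simp only [hC, Set.mem_setOf_eq] at hζ'C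
      have h1 := NormedAddCommGroup.tendsto_nhds_zero.1 hζ'C (ε / 2) (by positivity)
      filter_upwards [h1] with n hn
      have hsplit : ergAvg m K α n ξ - ergAvg m K α n ζ
          = (ergAvg m K α n ξ - ergAvg m K α n ζ')
            + (ergAvg m K α n ζ' - ergAvg m K α n ζ) := by abel
      rw [hsplit]
      have h2 : ‖ergAvg m K α n ζ' - ergAvg m K α n ζ‖ ≤ ‖ζ' - ζ‖ := by
        rw [← met_ergAvg_sub hcontr hcont hKfin ζ' ζ n]
        exact met_ergAvg_norm_le hcontr hcont hKfin _ n
      have h3 : ‖ζ' - ζ‖ < ε / 2 := by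
        rw [norm_sub_rev, ← dist_eq_norm]; exact hdist
      calc ‖(ergAvg m K α n ξ - ergAvg m K α n ζ')
            + (ergAvg m K α n ζ' - ergAvg m K α n ζ)‖
          ≤ ‖ergAvg m K α n ξ - ergAvg m K α n ζ'‖
            + ‖ergAvg m K α n ζ' - ergAvg m K α n ζ‖ := norm_add_le _ _
      _ < ε / 2 + ε / 2 := add_lt_add_of_lt_of_le hn (h2.trans h3.le)
      _ = ε := by ring
    have horb : (Set.range fun g : G => α g ξ) ⊆ C := by
      rintro _ ⟨h, rfl⟩
      exact met_ergAvg_action_tendsto hcontr hcont hKmeas hKpos hKfin hminv hact hFolR ξ h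
    have hCsub : closure (convexHull ℝ (Set.range fun g : G => α g ξ)) ⊆ C :=
      closure_minimal (convexHull_min horb hCconv) hCclosed
    have hξ'C : Tendsto (fun n => ergAvg m K α n ξ - ergAvg m K α n ξ') atTop (𝓝 0) :=
      hCsub hcl
    have hfix' : ∀ n, ergAvg m K α n ξ' = ξ' := fun n =>
      met_ergAvg_fixed hKpos hKfin hfix n
    have h2 : Tendsto (fun n => ergAvg m K α n ξ - ξ') atTop (𝓝 0) := by
      simpa only [hfix'] using hξ'C
    have := h2.add (tendsto_const_nhds (x := ξ'))
    simpa using this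
  tfae_finish
end

section
/- In the setting of the mean ergodic theorem for a Banach space E with contraction action (α_g)_{g∈G} and Følner averages A_n: if for every ξ ∈ E there exists ξ̄ ∈ E^G lying in the norm-closure of the convex hull of the orbit {α_g ξ : g ∈ G}, then A_n(ξ) converges to ξ̄ in norm for every ξ ∈ E. -/
open MeasureTheory Filter Topology

section Aux

variable {G : Type*} [MeasurableSpace G] {E : Type*} [NormedAddCommGroup E] [NormedSpace ℝ E]

lemma isFiniteRestrict (m : Measure G) {B : Set G} (h : m B < ⊤) :
    IsFiniteMeasure (m.restrict B) :=
  ⟨by rwa [Measure.restrict_apply_univ]⟩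

lemma integrable_of_bound (m : Measure G) (B : Set G) (h : m B < ⊤) {F : G → E}
    (hF : AEStronglyMeasurable F (m.restrict B)) {M : ℝ} (hb : ∀ u, ‖F u‖ ≤ M) :
    Integrable F (m.restrict B) := by
  have := isFiniteRestrict m h
  exact ⟨hF, HasFiniteIntegral.of_bounded (ae_of_all _ hb)⟩

lemma restrict_split (m : Measure G) (B : Set G) {K : Set G} (hK : MeasurableSet K) :
    m.restrict B = m.restrict (B ∩ K) + m.restrict (B \ K) := by
  ext C hC
  rw [Measure.add_apply, Measure.restrict_apply hC, Measure.restrict_apply hC,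
    Measure.restrict_apply hC, ← Set.inter_assoc,
    show C ∩ (B \ K) = (C ∩ B) \ K by rw [Set.inter_diff_assoc],
    measure_inter_add_diff (C ∩ B) hK]

lemma image_inter_preimage (T : G → G) (K C : Set G) :
    T '' (K ∩ T ⁻¹' C) = T '' K ∩ C := by
  apply Set.Subset.antisymm
  · rintro _ ⟨h, ⟨hK, hC⟩, rfl⟩; exact ⟨⟨h, hK, rfl⟩, hC⟩
  · rintro u ⟨⟨h, hh, rfl⟩, hC⟩; exact ⟨h, ⟨hh, hC⟩, rfl⟩

lemma lintegral_cov (m : Measure G) (T : G → G) {K : Set G} (hK : MeasurableSet K)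
    (himg : ∀ B : Set G, m (T '' B) = m B)
    {f : G → ℝ} (hf : Measurable f) (hfT : Measurable fun h => f (T h))
    (hnn : ∀ u, 0 ≤ f u) :
    ∫⁻ h in K, ENNReal.ofReal (f (T h)) ∂m = ∫⁻ u in T '' K, ENNReal.ofReal (f u) ∂m := by
  rw [lintegral_eq_lintegral_meas_lt _ (ae_of_all _ fun h => hnn (T h)) hfT.aemeasurable,
    lintegral_eq_lintegral_meas_lt _ (ae_of_all _ fun u => hnn u) hf.aemeasurable]
  refine lintegral_congr fun t => ?_
  have hs1 : MeasurableSet {a : G | t < f (T a)} := measurableSet_lt measurable_const hfT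
  have hs2 : MeasurableSet {a : G | t < f a} := measurableSet_lt measurable_const hf
  rw [Measure.restrict_apply hs1, Measure.restrict_apply hs2]
  calc m ({a | t < f (T a)} ∩ K) = m (K ∩ T ⁻¹' {u | t < f u}) := by
        rw [Set.inter_comm]; rfl
    _ = m (T '' (K ∩ T ⁻¹' {u | t < f u})) := (himg _).symm
    _ = m ({u | t < f u} ∩ T '' K) := by rw [image_inter_preimage, Set.inter_comm]

variable [CompleteSpace E]

lemma integral_cov (m : Measure G) (T : G → G) {K : Set G} (hK : MeasurableSet K)
    (hKfin : m K < ⊤) (himg : ∀ B : Set G, m (T '' B) = m B)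
    {F : G → E} (hFm : StronglyMeasurable F) (hFTm : StronglyMeasurable fun h => F (T h))
    {M : ℝ} (hM : ∀ u, ‖F u‖ ≤ M) :
    ∫ h in K, F (T h) ∂m = ∫ u in T '' K, F u ∂m := by
  have hTKfin : m (T '' K) < ⊤ := by rw [himg]; exact hKfin
  have hIntT : Integrable (fun h => F (T h)) (m.restrict K) :=
    integrable_of_bound m K hKfin hFTm.aestronglyMeasurable fun h => hM (T h)
  have hInt : Integrable F (m.restrict (T '' K)) :=
    integrable_of_bound m _ hTKfin hFm.aestronglyMeasurable hM
  rw [NormedSpace.eq_iff_forall_dual_eq ℝ]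
  intro φ
  rw [← ContinuousLinearMap.integral_comp_comm φ hIntT,
    ← ContinuousLinearMap.integral_comp_comm φ hInt]
  set C : ℝ := ‖φ‖ * M with hCdef
  have hnn : ∀ u, 0 ≤ φ (F u) + C := by
    intro u
    have h1 : ‖φ (F u)‖ ≤ C :=
      le_trans (φ.le_opNorm (F u)) (mul_le_mul_of_nonneg_left (hM u) (norm_nonneg φ))
    rw [Real.norm_eq_abs] at h1
    linarith [neg_abs_le (φ (F u)), le_of_abs_le h1]
  have hfm : Measurable fun u => φ (F u) + C :=
    ((φ.continuous.comp_stronglyMeasurable hFm).measurable).add_const C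
  have hfTm : Measurable fun h => φ (F (T h)) + C :=
    ((φ.continuous.comp_stronglyMeasurable hFTm).measurable).add_const C
  have key : ∫ h in K, (φ (F (T h)) + C) ∂m = ∫ u in T '' K, (φ (F u) + C) ∂m := by
    rw [integral_eq_lintegral_of_nonneg_ae (ae_of_all _ fun h => hnn (T h))
        hfTm.aestronglyMeasurable,
      integral_eq_lintegral_of_nonneg_ae (ae_of_all _ hnn) hfm.aestronglyMeasurable]
    congr 1
    exact lintegral_cov m T hK himg hfm hfTm hnn
  have hfin1 := isFiniteRestrict m hKfin
  have hfin2 := isFiniteRestrict m hTKfin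
  have h1 : ∫ h in K, (φ (F (T h)) + C) ∂m
      = (∫ h in K, φ (F (T h)) ∂m) + (m K).toReal * C := by
    rw [integral_add (φ.integrable_comp hIntT) (integrable_const C), integral_const,
      measureReal_restrict_apply_univ, Measure.real, smul_eq_mul]
  have h2 : ∫ u in T '' K, (φ (F u) + C) ∂m
      = (∫ u in T '' K, φ (F u) ∂m) + (m K).toReal * C := by
    rw [integral_add (φ.integrable_comp hInt) (integrable_const C), integral_const,
      measureReal_restrict_apply_univ, Measure.real, himg, smul_eq_mul]
  rw [h1, h2] at key
  linarith

/-- The key Følner-type bound for the difference of the integral of `F ∘ T` and `F` over `Kn`. -/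
lemma avg_diff_bound (m : Measure G) (T : G → G) {Kn : Set G} (hK : MeasurableSet Kn)
    (hKfin : m Kn < ⊤) (himg : ∀ B : Set G, m (T '' B) = m B)
    {F : G → E} (hFm : StronglyMeasurable F) (hFTm : StronglyMeasurable fun h => F (T h))
    {M : ℝ} (hM : ∀ u, ‖F u‖ ≤ M) :
    ‖(∫ h in Kn, F (T h) ∂m) - ∫ u in Kn, F u ∂m‖
      ≤ 2 * M * (m (symmDiff Kn (T '' Kn))).toReal := by
  rcases isEmpty_or_nonempty G with hG | hG
  · have hKe : Kn = ∅ := Set.eq_empty_of_isEmpty Kn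
    simp [hKe]
  set B : Set G := T '' Kn with hBdef
  have hmB : m B = m Kn := himg Kn
  have hBfin : m B ≠ ⊤ := by rw [hmB]; exact hKfin.ne
  set B' : Set G := toMeasurable m B with hB'def
  have hB'meas : MeasurableSet B' := measurableSet_toMeasurable m B
  have hmB' : m B' = m B := measure_toMeasurable B
  have hBsub : B ⊆ B' := subset_toMeasurable m B
  have hrB' : m.restrict B' = m.restrict B := Measure.restrict_toMeasurable hBfin
  have hcov : ∫ h in Kn, F (T h) ∂m = ∫ u in B, F u ∂m :=
    integral_cov m T hK hKfin himg hFm hFTm hM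
  have intOn : ∀ S : Set G, m S < ⊤ → Integrable F (m.restrict S) := fun S hS =>
    integrable_of_bound m S hS hFm.aestronglyMeasurable hM
  have hfin1 : m (B' ∩ Kn) < ⊤ := (measure_mono Set.inter_subset_right).trans_lt hKfin
  have hfin2 : m (B' \ Kn) < ⊤ :=
    (measure_mono Set.diff_subset).trans_lt (by rw [hmB', hmB]; exact hKfin)
  have hfin3 : m (Kn ∩ B') < ⊤ := (measure_mono Set.inter_subset_left).trans_lt hKfin
  have hfin4 : m (Kn \ B') < ⊤ := (measure_mono Set.diff_subset).trans_lt hKfin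
  have hsplit1 : (∫ u in B', F u ∂m)
      = (∫ u in B' ∩ Kn, F u ∂m) + ∫ u in B' \ Kn, F u ∂m := by
    rw [restrict_split m B' hK]
    exact integral_add_measure (intOn _ hfin1) (intOn _ hfin2)
  have hsplit2 : (∫ u in Kn, F u ∂m)
      = (∫ u in Kn ∩ B', F u ∂m) + ∫ u in Kn \ B', F u ∂m := by
    rw [restrict_split m Kn hB'meas]
    exact integral_add_measure (intOn _ hfin3) (intOn _ hfin4)
  have hdiff2 : (∫ h in Kn, F (T h) ∂m) - ∫ u in Kn, F u ∂m
      = (∫ u in B' \ Kn, F u ∂m) - ∫ u in Kn \ B', F u ∂m := by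
    rw [hcov, ← hrB', hsplit1, hsplit2, Set.inter_comm B' Kn]
    abel
  -- norm bounds on the two pieces
  have hM0 : 0 ≤ M := by
    obtain ⟨u⟩ := hG
    exact le_trans (norm_nonneg (F u)) (hM u)
  have hn1 : ‖∫ u in B' \ Kn, F u ∂m‖ ≤ M * (m (B' \ Kn)).toReal := by
    have := isFiniteRestrict m hfin2
    have h := norm_integral_le_of_norm_le_const (μ := m.restrict (B' \ Kn)) (f := F)
      (ae_of_all _ hM)
    rwa [measureReal_restrict_apply_univ, Measure.real] at h
  have hn2 : ‖∫ u in Kn \ B', F u ∂m‖ ≤ M * (m (Kn \ B')).toReal := by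
    have := isFiniteRestrict m hfin4
    have h := norm_integral_le_of_norm_le_const (μ := m.restrict (Kn \ B')) (f := F)
      (ae_of_all _ hM)
    rwa [measureReal_restrict_apply_univ, Measure.real] at h
  -- measure comparisons
  have e1 : m (B' \ Kn) ≤ m (B \ Kn) := by
    have h1 := measure_inter_add_diff (μ := m) B' hK
    have h2 := measure_inter_add_diff (μ := m) B hK
    have h3 : m (B ∩ Kn) ≤ m (B' ∩ Kn) :=
      measure_mono (Set.inter_subset_inter_left _ hBsub)
    have h5 : m (B' ∩ Kn) + m (B' \ Kn) ≤ m (B' ∩ Kn) + m (B \ Kn) := by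
      rw [h1, hmB', ← h2]
      exact add_le_add_left h3 _
    exact ENNReal.le_of_add_le_add_left hfin1.ne h5
  have e2 : m (Kn \ B') ≤ m (Kn \ B) := measure_mono (Set.diff_subset_diff_right hBsub)
  have hsd : symmDiff Kn B = (Kn \ B) ∪ (B \ Kn) := symmDiff_def Kn B
  have hsub1 : B \ Kn ⊆ symmDiff Kn B := by rw [hsd]; exact Set.subset_union_right
  have hsub2 : Kn \ B ⊆ symmDiff Kn B := by rw [hsd]; exact Set.subset_union_left
  have hsdfin : m (symmDiff Kn B) ≠ ⊤ := by
    have hsub : symmDiff Kn B ⊆ Kn ∪ B := by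
      rw [hsd]; exact Set.union_subset_union Set.diff_subset Set.diff_subset
    exact ((measure_mono hsub).trans_lt ((measure_union_le _ _).trans_lt
      (by rw [hmB]; exact ENNReal.add_lt_top.mpr ⟨hKfin, hKfin⟩))).ne
  have t1 : (m (B' \ Kn)).toReal ≤ (m (symmDiff Kn B)).toReal :=
    ENNReal.toReal_mono hsdfin (e1.trans (measure_mono hsub1))
  have t2 : (m (Kn \ B')).toReal ≤ (m (symmDiff Kn B)).toReal :=
    ENNReal.toReal_mono hsdfin (e2.trans (measure_mono hsub2))
  calc ‖(∫ h in Kn, F (T h) ∂m) - ∫ u in Kn, F u ∂m‖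
      = ‖(∫ u in B' \ Kn, F u ∂m) - ∫ u in Kn \ B', F u ∂m‖ := by rw [hdiff2]
    _ ≤ ‖∫ u in B' \ Kn, F u ∂m‖ + ‖∫ u in Kn \ B', F u ∂m‖ := norm_sub_le _ _
    _ ≤ M * (m (symmDiff Kn B)).toReal + M * (m (symmDiff Kn B)).toReal := by
        gcongr
        · exact hn1.trans (by gcongr)
        · exact hn2.trans (by gcongr)
    _ = 2 * M * (m (symmDiff Kn (T '' Kn))).toReal := by rw [← hBdef]; ring

end Aux

/-- **(4) ⇒ (1) of the mean ergodic theorem.** If for every `ξ` there is a fixed point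
`ξ̄` in the norm closure of the convex hull of the orbit `{α_g ξ : g ∈ G}`, then for every
`ξ` the Følner averages `A_n ξ` converge in norm to such a fixed point `ξ̄`. -/
theorem mean_ergodic_norm_convergence
    {E : Type*} [NormedAddCommGroup E] [NormedSpace ℝ E] [CompleteSpace E]
    {G : Type*} [Semigroup G] [TopologicalSpace G] [T2Space G]
    [SecondCountableTopology G] [LocallyCompactSpace G]
    [MeasurableSpace G] [BorelSpace G]
    (m : Measure G) [SigmaFinite m]
    (hminv : ∀ (g : G) (B : Set G), m ((g * ·) '' B) = m B ∧ m ((· * g) '' B) = m B)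
    (K : ℕ → Set G) (hKmeas : ∀ n, MeasurableSet (K n))
    (hKpos : ∀ n, 0 < m (K n)) (hKfin : ∀ n, m (K n) < ⊤)
    (hFolR : ∀ g : G,
      Tendsto (fun n => m (symmDiff (K n) ((· * g) '' K n)) / m (K n)) atTop (nhds 0))
    (hFolL : ∀ g : G,
      Tendsto (fun n => m (symmDiff (K n) ((g * ·) '' K n)) / m (K n)) atTop (nhds 0))
    (α : G → E →L[ℝ] E)
    (hact : ∀ g h : G, (α g).comp (α h) = α (g * h))
    (hcontr : ∀ g : G, ‖α g‖ ≤ 1)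
    (hcont : ∀ ξ : E, Continuous fun g => α g ξ)
    (hfix : ∀ ξ : E, ∃ ξ' : E, (∀ g : G, α g ξ' = ξ') ∧
      ξ' ∈ closure (convexHull ℝ (Set.range fun g : G => α g ξ))) :
    ∀ ξ : E, ∃ ξ' : E, (∀ g : G, α g ξ' = ξ') ∧
      ξ' ∈ closure (convexHull ℝ (Set.range fun g : G => α g ξ)) ∧
      Tendsto (fun n => ergAvg m K α n ξ) atTop (nhds ξ') := by
  intro ξ
  obtain ⟨ξ', hfixξ', hclos⟩ := hfix ξ
  refine ⟨ξ', hfixξ', hclos, ?_⟩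
  have hne : ∀ n, (m (K n)).toReal ≠ 0 := fun n =>
    ENNReal.toReal_ne_zero.mpr ⟨(hKpos n).ne', (hKfin n).ne⟩
  have hble : ∀ (ζ : E) (g : G), ‖α g ζ‖ ≤ ‖ζ‖ := fun ζ g =>
    le_trans ((α g).le_opNorm ζ) (mul_le_of_le_one_left (norm_nonneg ζ) (hcontr g))
  have hsm : ∀ ζ : E, StronglyMeasurable fun g : G => α g ζ := fun ζ =>
    (hcont ζ).stronglyMeasurable
  have hIntOn : ∀ (ζ : E) (n : ℕ), Integrable (fun g : G => α g ζ) (m.restrict (K n)) :=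
    fun ζ n => integrable_of_bound m _ (hKfin n) (hsm ζ).aestronglyMeasurable fun g => hble ζ g
  -- A_n fixes ξ'
  have hAfix : ∀ n, ergAvg m K α n ξ' = ξ' := by
    intro n
    rw [ergAvg, show (fun g : G => α g ξ') = fun _ : G => ξ' from funext hfixξ',
      setIntegral_const, smul_smul, Measure.real, inv_mul_cancel₀ (hne n), one_smul]
  -- A_n is additive and homogeneous
  have hAadd : ∀ n (x y : E),
      ergAvg m K α n (x + y) = ergAvg m K α n x + ergAvg m K α n y := by
    intro n x y
    have h : ∫ g in K n, α g (x + y) ∂m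
        = (∫ g in K n, α g x ∂m) + ∫ g in K n, α g y ∂m := by
      rw [← integral_add (hIntOn x n) (hIntOn y n)]
      exact integral_congr_ae (ae_of_all _ fun g => map_add (α g) x y)
    rw [ergAvg, h, smul_add]; rfl
  have hAsmul : ∀ n (c : ℝ) (x : E), ergAvg m K α n (c • x) = c • ergAvg m K α n x := by
    intro n c x
    have h : ∫ g in K n, α g (c • x) ∂m = c • ∫ g in K n, α g x ∂m := by
      rw [← integral_smul]
      exact integral_congr_ae (ae_of_all _ fun g => map_smul (α g) c x)
    rw [ergAvg, h, smul_comm]; rfl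
  have hAsub : ∀ n (x y : E),
      ergAvg m K α n (x - y) = ergAvg m K α n x - ergAvg m K α n y := by
    intro n x y
    have h := hAadd n (x - y) y
    rw [sub_add_cancel] at h
    exact eq_sub_of_add_eq h.symm
  -- A_n is a contraction
  have hAnorm : ∀ n (x : E), ‖ergAvg m K α n x‖ ≤ ‖x‖ := by
    intro n x
    have hfm := isFiniteRestrict m (hKfin n)
    have h1 := norm_integral_le_of_norm_le_const (μ := m.restrict (K n))
      (f := fun g : G => α g x) (ae_of_all _ fun g => hble x g)
    rw [measureReal_restrict_apply_univ, Measure.real] at h1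
    calc ‖ergAvg m K α n x‖ = (m (K n)).toReal⁻¹ * ‖∫ g in K n, α g x ∂m‖ := by
          rw [ergAvg, norm_smul, Real.norm_eq_abs,
            abs_of_nonneg (inv_nonneg.mpr ENNReal.toReal_nonneg)]
      _ ≤ (m (K n)).toReal⁻¹ * (‖x‖ * (m (K n)).toReal) :=
          mul_le_mul_of_nonneg_left h1 (inv_nonneg.mpr ENNReal.toReal_nonneg)
      _ = ‖x‖ := by
          rw [mul_comm (‖x‖), ← mul_assoc, inv_mul_cancel₀ (hne n), one_mul]
  -- Key Følner estimate
  have hkey : ∀ g : G,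
      Tendsto (fun n => ergAvg m K α n (α g ξ) - ergAvg m K α n ξ) atTop (nhds 0) := by
    intro g
    have himg : ∀ B : Set G, m ((· * g) '' B) = m B := fun B => (hminv g B).2
    have hFT : ∀ h : G, α (h * g) ξ = α h (α g ξ) := by
      intro h
      rw [← hact h g]; rfl
    have hFTc : StronglyMeasurable fun h : G => α (h * g) ξ := by
      rw [show (fun h : G => α (h * g) ξ) = fun h : G => α h (α g ξ) from funext hFT]
      exact (hcont (α g ξ)).stronglyMeasurable
    have hbnd : ∀ n, ‖ergAvg m K α n (α g ξ) - ergAvg m K α n ξ‖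
        ≤ 2 * ‖ξ‖ * (m (symmDiff (K n) ((· * g) '' K n)) / m (K n)).toReal := by
      intro n
      have hgoal : (m (K n)).toReal⁻¹ * (2 * ‖ξ‖ * (m (symmDiff (K n) ((· * g) '' K n))).toReal)
          = 2 * ‖ξ‖ * (m (symmDiff (K n) ((· * g) '' K n)) / m (K n)).toReal := by
        rw [ENNReal.toReal_div]; ring
      rw [← hgoal]
      have hint : ∫ h in K n, α h (α g ξ) ∂m = ∫ h in K n, α (h * g) ξ ∂m :=
        integral_congr_ae (ae_of_all _ fun h => (hFT h).symm)
      have hd : ergAvg m K α n (α g ξ) - ergAvg m K α n ξ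
          = (m (K n)).toReal⁻¹ •
            ((∫ h in K n, α (h * g) ξ ∂m) - ∫ u in K n, α u ξ ∂m) := by
        rw [ergAvg, ergAvg, hint, ← smul_sub]
      rw [hd, norm_smul, Real.norm_eq_abs,
        abs_of_nonneg (inv_nonneg.mpr ENNReal.toReal_nonneg)]
      refine mul_le_mul_of_nonneg_left ?_ (inv_nonneg.mpr ENNReal.toReal_nonneg)
      exact avg_diff_bound m (· * g) (hKmeas n) (hKfin n) himg
        (hsm ξ) hFTc (fun u => hble ξ u)
    have h0 : Tendsto
        (fun n => (m (symmDiff (K n) ((· * g) '' K n)) / m (K n)).toReal)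
        atTop (nhds 0) := by
      have := (ENNReal.tendsto_toReal (a := 0) (by simp)).comp (hFolR g)
      simpa [Function.comp_def] using this
    exact squeeze_zero_norm hbnd (by simpa using h0.const_mul (2 * ‖ξ‖))
  -- every element of the convex hull of the orbit has averages asymptotic to A_n ξ
  have hconv : ∀ η ∈ convexHull ℝ (Set.range fun g : G => α g ξ),
      Tendsto (fun n => ergAvg m K α n ξ - ergAvg m K α n η) atTop (nhds 0) := by
    have hsub : convexHull ℝ (Set.range fun g : G => α g ξ) ⊆
        {η : E | Tendsto (fun n => ergAvg m K α n ξ - ergAvg m K α n η) atTop (nhds 0)} := by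
      apply convexHull_min
      · rintro _ ⟨g, rfl⟩
        have := (hkey g).neg
        simpa [neg_sub] using this
      · intro x hx y hy a b ha hb hab
        simp only [Set.mem_setOf_eq] at hx hy ⊢
        have heq : (fun n => ergAvg m K α n ξ - ergAvg m K α n (a • x + b • y))
            = fun n => a • (ergAvg m K α n ξ - ergAvg m K α n x)
                + b • (ergAvg m K α n ξ - ergAvg m K α n y) := by
          funext n
          have h1 : a • ergAvg m K α n ξ + b • ergAvg m K α n ξ = ergAvg m K α n ξ := by
            rw [← add_smul, hab, one_smul]
          calc ergAvg m K α n ξ - ergAvg m K α n (a • x + b • y)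
              = (a • ergAvg m K α n ξ + b • ergAvg m K α n ξ)
                - (a • ergAvg m K α n x + b • ergAvg m K α n y) := by
                rw [h1, hAadd, hAsmul, hAsmul]
            _ = a • (ergAvg m K α n ξ - ergAvg m K α n x)
                + b • (ergAvg m K α n ξ - ergAvg m K α n y) := by
                rw [smul_sub, smul_sub]; abel
        rw [heq]
        simpa using (hx.const_smul a).add (hy.const_smul b)
    exact fun η hη => hsub hη
  -- final ε-argument
  rw [Metric.tendsto_atTop]
  intro ε hε
  obtain ⟨η, hη, hdist⟩ := Metric.mem_closure_iff.mp hclos (ε / 2) (by linarith)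
  obtain ⟨N, hN⟩ := Metric.tendsto_atTop.mp (hconv η hη) (ε / 2) (by linarith)
  refine ⟨N, fun n hn => ?_⟩
  have h3 := hN n hn
  rw [dist_zero_right] at h3
  have h4 : ‖ergAvg m K α n η - ξ'‖ ≤ ‖η - ξ'‖ := by
    have : ergAvg m K α n η - ξ' = ergAvg m K α n (η - ξ') := by
      rw [hAsub, hAfix]
    rw [this]; exact hAnorm n (η - ξ')
  have h5 : ‖η - ξ'‖ < ε / 2 := by
    rw [dist_comm, dist_eq_norm] at hdist; exact hdist
  calc dist (ergAvg m K α n ξ) ξ' = ‖ergAvg m K α n ξ - ξ'‖ := dist_eq_norm _ _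
    _ ≤ ‖ergAvg m K α n ξ - ergAvg m K α n η‖ + ‖ergAvg m K α n η - ξ'‖ := by
        have := norm_sub_le_norm_sub_add_norm_sub (ergAvg m K α n ξ) (ergAvg m K α n η) ξ'
        exact this
    _ < ε / 2 + ε / 2 := add_lt_add_of_lt_of_le h3 (h4.trans_lt h5).le
    _ = ε := by ring
end

section
/- Let M be a von Neumann algebra, K a weak*-compact convex subset of the positive part of the unit ball of M*, and suppose there exist a faithful normal state τ_p on M, a projection p with τ_p(p) = 1, and 0 < ε < 1/2 such that for every μ ∈ K there is x_μ with 0 ≤ x_μ ≤ p, τ_p(x_μ) ≥ 1 − ε, and μ(x_μ) < ε/2. Then there exists a single x_ε with 0 ≤ x_ε ≤ p, τ_p(x_ε) ≥ 1 − ε, and μ(x_ε) < ε for all μ ∈ K. (Hahn–Banach separation and barycenter argument.) -/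
open scoped ComplexOrder
open MeasureTheory Filter Topology

section VN
variable {M : Type*} [NormedRing M] [StarRing M] [CStarRing M] [NormedAlgebra ℂ M]
  [PartialOrder M] [StarOrderedRing M] [CompleteSpace M]

/-- `p` is an orthogonal projection. -/
def IsProjection (p : M) : Prop := p * p = p ∧ star p = p

/-- A continuous linear functional is positive if it is nonnegative on positive elements. -/
def IsPositiveFunctional (φ : M →L[ℂ] ℂ) : Prop := ∀ x : M, 0 ≤ x → 0 ≤ φ x

/-- A functional is normal if it is order continuous on increasing nets possessing a
least upper bound. -/
def IsNormalFunctional (φ : M →L[ℂ] ℂ) : Prop :=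
  ∀ (ι : Type) [Preorder ι] (x : ι → M) (l : M), Monotone x → IsLUB (Set.range x) l →
    Filter.Tendsto (fun i => φ (x i)) Filter.atTop (nhds (φ l))

/-- A positive functional is singular if it dominates no nonzero positive normal
functional: whenever `ψ` is positive normal with `φ - ψ ≥ 0`, then `ψ = 0`. -/
def IsSingularFunctional (φ : M →L[ℂ] ℂ) : Prop :=
  ∀ ψ : M →L[ℂ] ℂ, IsPositiveFunctional ψ → IsNormalFunctional ψ →
    IsPositiveFunctional (φ - ψ) → ψ = 0

/-- `e` is the support projection of the functional `φ`: the smallest projection with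
`φ(e) = φ(1)`. -/
def IsSupportProjOf (φ : M →L[ℂ] ℂ) (e : M) : Prop :=
  IsProjection e ∧ φ e = φ 1 ∧ ∀ f : M, IsProjection f → φ f = φ 1 → e ≤ f

/-- `s` is the support projection of the operator `x`: the smallest projection with
`s * x = x`. -/
def IsSupportOf (x s : M) : Prop :=
  IsProjection s ∧ s * x = x ∧ ∀ t : M, IsProjection t → t * x = x → s ≤ t

/-- The restriction of `φ` to the corner `rMr` is singular; characterised (Takesaki) by:
below every nonzero subprojection of `r` there is a nonzero subprojection on which `φ`
vanishes. -/
def IsSingularOnCorner (φ : M →L[ℂ] ℂ) (r : M) : Prop :=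
  ∀ e : M, IsProjection e → e ≤ r → e ≠ 0 →
    ∃ f : M, IsProjection f ∧ f ≤ e ∧ f ≠ 0 ∧ φ f = 0

set_option linter.unusedSectionVars false in
lemma star_realCast_smul_one (r : ℝ) : star (((r:ℂ)) • (1:M)) = (r:ℂ) • (1:M) := by
  have hcont : Continuous (fun r : ℝ => star (((r:ℂ)) • (1:M)) - ((r:ℂ)) • (1:M)) := by
    fun_prop
  have hq : ∀ q : ℚ, star (((q:ℂ)) • (1:M)) = ((q:ℂ)) • (1:M) := by
    intro q
    have hb : ((q.den : ℂ)) ≠ 0 := by exact_mod_cast q.den_nz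
    apply smul_right_injective M hb
    have hden : (q.den : ℂ) * (q : ℂ) = (q.num : ℂ) := by
      have : ((q.den : ℚ)) * q = (q.num : ℚ) := by rw [mul_comm]; exact Rat.mul_den_eq_num q
      exact_mod_cast this
    have h1 : (q.den : ℂ) • (((q:ℂ)) • (1:M)) = (q.num : ℂ) • (1:M) := by
      rw [smul_smul, hden]
    have h2 : star ((q.num : ℂ) • (1:M)) = (q.num : ℂ) • (1:M) := by
      rw [Int.cast_smul_eq_zsmul, star_zsmul, star_one]
    calc (q.den : ℂ) • star (((q:ℂ)) • (1:M))
        = star ((q.den : ℂ) • (((q:ℂ)) • (1:M))) := by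
          rw [Nat.cast_smul_eq_nsmul, Nat.cast_smul_eq_nsmul, star_nsmul]
      _ = (q.den : ℂ) • (((q:ℂ)) • (1:M)) := by rw [h1, h2, ← h1]
  have heq : Set.EqOn (fun r : ℝ => star (((r:ℂ)) • (1:M)) - ((r:ℂ)) • (1:M)) 0 (Set.range ((↑) : ℚ → ℝ)) := by
    rintro _ ⟨q, rfl⟩
    simp only [Pi.zero_apply, sub_eq_zero]
    push_cast
    exact hq q
  have hall := Continuous.ext_on Rat.denseRange_cast hcont continuous_const heq
  exact sub_eq_zero.mp (congrFun hall r)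

lemma realCast_smul_nonneg {r : ℝ} (hr : 0 ≤ r) {x : M} (hx : 0 ≤ x) :
    0 ≤ (r:ℂ) • x := by
  rw [StarOrderedRing.nonneg_iff] at hx ⊢
  induction hx using AddSubmonoid.closure_induction with
  | mem s hs =>
    obtain ⟨s, rfl⟩ := hs
    set u : M := ((Real.sqrt r : ℂ)) • 1 with hu
    have hstaru : star u = u := star_realCast_smul_one _
    have key : star (u * s) * (u * s) = (r:ℂ) • (star s * s) := by
      rw [star_mul, hstaru, hu]
      simp only [smul_mul_assoc, mul_smul_comm, smul_smul, one_mul, mul_one]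
      rw [← Complex.ofReal_mul, Real.mul_self_sqrt hr]
    rw [← key]
    exact AddSubmonoid.subset_closure ⟨u * s, rfl⟩
  | zero => rw [smul_zero]; exact AddSubmonoid.zero_mem _
  | add a b _ _ ha hb => rw [smul_add]; exact AddSubmonoid.add_mem _ ha hb

end VN

set_option maxHeartbeats 1600000

/-- **Hahn–Banach / barycenter lemma.** Let `K` be a weak*-compact convex subset of the
positive part of the unit ball of `M*`, `τ_p` a faithful normal state, `p` a projection
with `τ_p(p) = 1` and `0 < ε < 1/2`. If for every `μ ∈ K` there exists `x_μ` with
`0 ≤ x_μ ≤ p`, `τ_p(x_μ) ≥ 1 − ε` and `μ(x_μ) < ε/2`, then there is a single `x_ε` with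
`0 ≤ x_ε ≤ p`, `τ_p(x_ε) ≥ 1 − ε` and `μ(x_ε) < ε` for all `μ ∈ K`. -/
theorem exists_uniform_small_element_of_weakStarCompact_convex
    {M : Type*} [NormedRing M] [StarRing M] [CStarRing M] [NormedAlgebra ℂ M]
    [PartialOrder M] [StarOrderedRing M] [CompleteSpace M]
    (K : Set (M →L[ℂ] ℂ))
    (hKpos : ∀ μ ∈ K, IsPositiveFunctional μ ∧ ‖μ‖ ≤ 1)
    (hKconv : Convex ℝ K)
    (hKcpt : IsCompact (⇑StrongDual.toWeakDual '' K))
    (τp : M →L[ℂ] ℂ) (hτpos : IsPositiveFunctional τp)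
    (hτnormal : IsNormalFunctional τp)
    (hτfaithful : ∀ x : M, 0 ≤ x → τp x = 0 → x = 0)
    (hτstate : τp 1 = 1)
    (p : M) (hp : IsProjection p) (hτp : τp p = 1)
    (ε : ℝ) (hε0 : 0 < ε) (hε : ε < 1 / 2)
    (hyp : ∀ μ ∈ K, ∃ x : M, 0 ≤ x ∧ x ≤ p ∧ 1 - ε ≤ (τp x).re ∧ (μ x).re < ε / 2) :
    ∃ x : M, 0 ≤ x ∧ x ≤ p ∧ 1 - ε ≤ (τp x).re ∧ ∀ μ ∈ K, (μ x).re < ε := by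
  classical
  rcases Set.eq_empty_or_nonempty K with hKe | ⟨ν₀, hν₀⟩
  · refine ⟨p, ?_, le_refl p, ?_, ?_⟩
    · have h1 : (0:M) ≤ star p * p := star_mul_self_nonneg p
      rwa [hp.2, hp.1] at h1
    · rw [hτp]; norm_num; linarith
    · intro μ hμ; rw [hKe] at hμ; exact absurd hμ (Set.notMem_empty μ)
  · choose xf hx0 hxp hxτ hxμ using hyp
    set U : K → Set (WeakDual ℂ M) :=
      fun μ => {φ : WeakDual ℂ M | (φ (xf μ.1 μ.2)).re < ε / 2} with hU
    have hUopen : ∀ μ : K, IsOpen (U μ) := by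
      intro μ
      exact isOpen_lt (Complex.continuous_re.comp (WeakDual.eval_continuous _)) continuous_const
    have hcover : (⇑StrongDual.toWeakDual '' K) ⊆ ⋃ μ : K, U μ := by
      rintro _ ⟨ν, hν, rfl⟩
      exact Set.mem_iUnion.mpr ⟨⟨ν, hν⟩, hxμ ν hν⟩
    obtain ⟨t, ht⟩ := hKcpt.elim_finite_subcover U hUopen hcover
    set ι := {μ : K // μ ∈ t} with hι
    haveI : Fintype ι := FinsetCoe.fintype t
    set x : ι → M := fun i => xf i.1.1 i.1.2 with hxdef
    have hsmall : ∀ ν ∈ K, ∃ i : ι, (ν (x i)).re < ε / 2 := by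
      intro ν hν
      have h1 : StrongDual.toWeakDual ν ∈ ⋃ μ ∈ t, U μ := ht ⟨ν, hν, rfl⟩
      obtain ⟨μ, hμt, hμU⟩ := Set.mem_iUnion₂.mp h1
      exact ⟨⟨μ, hμt⟩, hμU⟩
    -- the linear evaluation map into ℝ^ι
    set Tl : (M →L[ℂ] ℂ) →ₗ[ℝ] (ι → ℝ) :=
      { toFun := fun ν i => (ν (x i)).re
        map_add' := by intro ν₁ ν₂; funext i; simp
        map_smul' := by intro a ν; funext i; simp [Complex.smul_re] } with hTl
    set A : Set (ι → ℝ) := Tl '' K with hA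
    have hAconv : Convex ℝ A := hKconv.linear_image Tl
    have hAcpt : IsCompact A := by
      have hg : Continuous fun φ : WeakDual ℂ M => (fun i => (φ (x i)).re : ι → ℝ) :=
        continuous_pi fun i => Complex.continuous_re.comp (WeakDual.eval_continuous _)
      have himg : A = (fun φ : WeakDual ℂ M => (fun i => (φ (x i)).re : ι → ℝ)) ''
          (⇑StrongDual.toWeakDual '' K) := by
        rw [Set.image_image]; rfl
      rw [himg]
      exact hKcpt.image hg
    set B : Set (ι → ℝ) := {y | ∀ i, ε / 2 ≤ y i} with hB
    have hBconv : Convex ℝ B := by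
      intro y hy z hz a b ha hb hab
      intro i
      have h1 := hy i
      have h2 := hz i
      simp only [Pi.add_apply, Pi.smul_apply, smul_eq_mul]
      nlinarith
    have hBclosed : IsClosed B := by
      have : B = ⋂ i, {y : ι → ℝ | ε / 2 ≤ y i} := by ext y; simp [hB]
      rw [this]
      exact isClosed_iInter fun i => isClosed_le continuous_const (continuous_apply i)
    have hdisj : Disjoint A B := by
      rw [Set.disjoint_left]
      rintro _ ⟨ν, hν, rfl⟩ hyB
      obtain ⟨i, hi⟩ := hsmall ν hν
      exact absurd (hyB i) (not_le.mpr hi)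
    obtain ⟨f, u, v, hfA, huv, hfB⟩ :=
      geometric_hahn_banach_compact_closed hAconv hAcpt hBconv hBclosed hdisj
    set c : ι → ℝ := fun i => f (fun j => if i = j then 1 else 0) with hc
    have hrepr : ∀ y : ι → ℝ, f y = ∑ i, y i * c i := by
      intro y
      simpa [smul_eq_mul] using LinearMap.pi_apply_eq_sum_univ (f : (ι → ℝ) →ₗ[ℝ] ℝ) y
    set b₀ : ι → ℝ := fun _ => ε / 2 with hb₀
    have hb₀B : b₀ ∈ B := fun i => le_refl _
    have hvb₀ : v < f b₀ := hfB b₀ hb₀B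
    have hcnn : ∀ i, 0 ≤ c i := by
      intro i
      by_contra hci
      push_neg at hci
      set t₀ : ℝ := (f b₀ - v + 1) / (-c i) with ht₀
      have ht₀pos : 0 < t₀ := by
        apply div_pos; · linarith
        · linarith
      set b₁ : ι → ℝ := fun j => ε / 2 + if i = j then t₀ else 0 with hb₁
      have hb₁B : b₁ ∈ B := by
        intro j
        simp only [hb₁]
        by_cases hij : i = j <;> simp [hij] <;> linarith
      have hfb₁ : f b₁ = f b₀ + t₀ * c i := by
        rw [hrepr b₁, hrepr b₀]
        have h4 : ∑ j, b₁ j * c j = ∑ j, (b₀ j * c j + if i = j then t₀ * c j else 0) :=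
          Finset.sum_congr rfl (fun j _ => by
            by_cases hij : i = j <;> simp [hb₁, hb₀, hij] <;> ring)
        rw [h4, Finset.sum_add_distrib, Finset.sum_ite_eq]
        simp
      have hcne : c i ≠ 0 := ne_of_lt hci
      have ht₀c : t₀ * c i = -(f b₀ - v + 1) := by
        rw [ht₀, div_mul_eq_mul_div, mul_div_assoc, div_neg, div_self hcne]
        ring
      have : f b₁ = v - 1 := by rw [hfb₁, ht₀c]; ring
      have := hfB b₁ hb₁B
      linarith
    set S : ℝ := ∑ i, c i with hS
    have hfb₀S : f b₀ = ε / 2 * S := by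
      rw [hrepr b₀, hS, Finset.mul_sum]
    have hA0 : 0 ≤ f (Tl ν₀) := by
      rw [hrepr]
      apply Finset.sum_nonneg
      intro i _
      apply mul_nonneg _ (hcnn i)
      have h1 : 0 ≤ ν₀ (x i) := (hKpos ν₀ hν₀).1 (x i) (hx0 _ _)
      exact (Complex.le_def.mp h1).1
    have hSpos : 0 < S := by
      have h1 : f (Tl ν₀) < u := hfA _ ⟨ν₀, hν₀, rfl⟩
      nlinarith
    -- the convex combination
    refine ⟨∑ i, ((c i / S : ℝ) : ℂ) • x i, ?_, ?_, ?_, ?_⟩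
    · exact Finset.sum_nonneg fun i _ =>
        realCast_smul_nonneg (div_nonneg (hcnn i) hSpos.le) (hx0 _ _)
    · rw [← sub_nonneg]
      have hsum1 : ∑ i, ((c i / S : ℝ) : ℂ) = 1 := by
        rw [← Complex.ofReal_sum, ← Finset.sum_div, ← hS, div_self hSpos.ne']
        norm_num
      have hkey : p - ∑ i, ((c i / S : ℝ) : ℂ) • x i
          = ∑ i, ((c i / S : ℝ) : ℂ) • (p - x i) := by
        simp only [smul_sub]
        rw [Finset.sum_sub_distrib, ← Finset.sum_smul, hsum1, one_smul]
      rw [hkey]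
      exact Finset.sum_nonneg fun i _ =>
        realCast_smul_nonneg (div_nonneg (hcnn i) hSpos.le)
          (sub_nonneg.mpr (hxp _ _))
    · have hτx : (τp (∑ i, ((c i / S : ℝ) : ℂ) • x i)).re
          = ∑ i, (c i / S) * (τp (x i)).re := by
        rw [_root_.map_sum, Complex.re_sum]
        refine Finset.sum_congr rfl fun i _ => ?_
        rw [_root_.map_smul, smul_eq_mul, Complex.re_ofReal_mul]
      rw [hτx]
      have h1 : ∑ i, (c i / S) * (1 - ε) ≤ ∑ i, (c i / S) * (τp (x i)).re :=
        Finset.sum_le_sum fun i _ =>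
          mul_le_mul_of_nonneg_left (hxτ _ _) (div_nonneg (hcnn i) hSpos.le)
      have h2 : ∑ i, (c i / S) * (1 - ε) = 1 - ε := by
        rw [← Finset.sum_mul, ← Finset.sum_div, ← hS, div_self hSpos.ne', one_mul]
      linarith
    · intro μ hμ
      have hμx : (μ (∑ i, ((c i / S : ℝ) : ℂ) • x i)).re
          = ∑ i, (c i / S) * (μ (x i)).re := by
        rw [_root_.map_sum, Complex.re_sum]
        refine Finset.sum_congr rfl fun i _ => ?_
        rw [_root_.map_smul, smul_eq_mul, Complex.re_ofReal_mul]
      rw [hμx]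
      have h1 : f (Tl μ) < u := hfA _ ⟨μ, hμ, rfl⟩
      have h2 : f (Tl μ) = ∑ i, (μ (x i)).re * c i := hrepr _
      have h3 : ∑ i, (c i / S) * (μ (x i)).re = f (Tl μ) / S := by
        rw [h2, Finset.sum_div]
        refine Finset.sum_congr rfl fun i _ => ?_
        field_simp
      rw [h3]
      rw [div_lt_iff₀ hSpos]
      nlinarith
end

section
/- Let U be a unitary on a Hilbert space H, ε ∈ H a vector, and n₁ < n₂ < ⋯ a sequence such that U^{n_i}η ⟂ U^{n_j}η for i ≠ j, where ‖η‖ = 1. Let P_η denote the rank-one projection onto ℂη and α(x) = UxU*. Then the Cesàro averages A_n(P_η) = (1/n) Σ_{k=0}^{n−1} α^k(P_η) satisfy ‖A_n(P_η)‖ → 0 as n → ∞, i.e., P_η is a weakly wandering projection for the automorphism α of B(H). -/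
open Filter Topology

/-- Counting lemma: if `f : ℕ → ℝ` is nonnegative, bounded by `B`, and every shifted
window sum `∑ i < m+1, f (k + a i)` is at most `B` (a Bessel-type bound), then the
partial sums of `f` grow like `a m * B + n/(m+1) * B`. -/
lemma aux_sum_window (f : ℕ → ℝ) (B : ℝ) (a : ℕ → ℕ) (ha : Monotone a) (m n : ℕ)
    (h0 : ∀ j, 0 ≤ f j) (h1 : ∀ j, f j ≤ B)
    (h2 : ∀ k, ∑ i ∈ Finset.range (m + 1), f (k + a i) ≤ B) :
    ∑ j ∈ Finset.range n, f j ≤ (a m : ℝ) * B + ((n : ℝ) / (m + 1)) * B := by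
  have hB : 0 ≤ B := le_trans (h0 0) (h1 0)
  have hm1 : (0 : ℝ) < (m : ℝ) + 1 := by positivity
  have key : ((m : ℝ) + 1) * ∑ j ∈ Finset.Ico (a m) n, f j ≤ (n : ℝ) * B := by
    have step1 : ∀ i ∈ Finset.range (m + 1),
        ∑ j ∈ Finset.Ico (a m) n, f j ≤ ∑ k ∈ Finset.range n, f (k + a i) := by
      intro i hi
      have him : i ≤ m := by
        have := Finset.mem_range.mp hi; omega
      have hai : a i ≤ a m := ha him
      have hsub : Finset.Ico (a m) n ⊆ Finset.Ico (a i) (a i + n) := by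
        intro j hj
        simp only [Finset.mem_Ico] at *
        omega
      calc ∑ j ∈ Finset.Ico (a m) n, f j
          ≤ ∑ j ∈ Finset.Ico (a i) (a i + n), f j :=
            Finset.sum_le_sum_of_subset_of_nonneg hsub (fun j _ _ => h0 j)
        _ = ∑ k ∈ Finset.range n, f (k + a i) := by
            rw [Finset.sum_Ico_eq_sum_range]
            rw [Nat.add_sub_cancel_left]
            exact Finset.sum_congr rfl (fun k _ => by rw [add_comm])
    calc ((m : ℝ) + 1) * ∑ j ∈ Finset.Ico (a m) n, f j
        = ∑ _i ∈ Finset.range (m + 1), ∑ j ∈ Finset.Ico (a m) n, f j := by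
          rw [Finset.sum_const, Finset.card_range, nsmul_eq_mul]
          push_cast; ring
      _ ≤ ∑ i ∈ Finset.range (m + 1), ∑ k ∈ Finset.range n, f (k + a i) :=
          Finset.sum_le_sum step1
      _ = ∑ k ∈ Finset.range n, ∑ i ∈ Finset.range (m + 1), f (k + a i) := Finset.sum_comm
      _ ≤ ∑ _k ∈ Finset.range n, B := Finset.sum_le_sum (fun k _ => h2 k)
      _ = (n : ℝ) * B := by rw [Finset.sum_const, Finset.card_range, nsmul_eq_mul]
  have hIco : ∑ j ∈ Finset.Ico (a m) n, f j ≤ ((n : ℝ) / (m + 1)) * B := by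
    rw [div_mul_eq_mul_div, le_div_iff₀ hm1]
    calc (∑ j ∈ Finset.Ico (a m) n, f j) * ((m : ℝ) + 1)
        = ((m : ℝ) + 1) * ∑ j ∈ Finset.Ico (a m) n, f j := by ring
      _ ≤ (n : ℝ) * B := key
  rcases le_or_gt n (a m) with h | h
  · have hsum : ∑ j ∈ Finset.range n, f j ≤ ∑ j ∈ Finset.range (a m), f j :=
      Finset.sum_le_sum_of_subset_of_nonneg (Finset.range_subset_range.mpr h) (fun j _ _ => h0 j)
    have hsum2 : ∑ j ∈ Finset.range (a m), f j ≤ (a m : ℝ) * B := by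
      calc ∑ j ∈ Finset.range (a m), f j ≤ (Finset.range (a m)).card • B :=
            Finset.sum_le_card_nsmul _ _ _ (fun j _ => h1 j)
        _ = (a m : ℝ) * B := by rw [Finset.card_range, nsmul_eq_mul]
    have hpos : 0 ≤ ((n : ℝ) / (m + 1)) * B := by positivity
    linarith
  · have hsplit : ∑ j ∈ Finset.range n, f j
        = ∑ j ∈ Finset.range (a m), f j + ∑ j ∈ Finset.Ico (a m) n, f j := by
      simp only [Finset.range_eq_Ico]
      exact (Finset.sum_Ico_consecutive f (Nat.zero_le _) h.le).symm
    have hsum2 : ∑ j ∈ Finset.range (a m), f j ≤ (a m : ℝ) * B := by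
      calc ∑ j ∈ Finset.range (a m), f j ≤ (Finset.range (a m)).card • B :=
            Finset.sum_le_card_nsmul _ _ _ (fun j _ => h1 j)
        _ = (a m : ℝ) * B := by rw [Finset.card_range, nsmul_eq_mul]
    linarith

/-- If `T x = ∑ k ∈ s, ⟪v k, x⟫ • v k` and the quadratic form satisfies a Bessel-type
bound `∑ ‖⟪v k, x⟫‖² ≤ C ‖x‖²`, then `‖T‖ ≤ C`. -/
lemma aux_opNorm_le {H : Type*} [NormedAddCommGroup H] [InnerProductSpace ℂ H]
    (s : Finset ℕ) (v : ℕ → H) (T : H →L[ℂ] H)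
    (hT : ∀ x, T x = ∑ k ∈ s, (inner ℂ (v k) x : ℂ) • v k)
    (C : ℝ) (hC : 0 ≤ C)
    (hQ : ∀ x : H, ∑ k ∈ s, ‖(inner ℂ (v k) x : ℂ)‖ ^ 2 ≤ C * ‖x‖ ^ 2) :
    ‖T‖ ≤ C := by
  refine T.opNorm_le_bound hC (fun x => ?_)
  by_cases hTx : T x = 0
  · rw [hTx, norm_zero]; positivity
  have hTxpos : 0 < ‖T x‖ := norm_pos_iff.mpr hTx
  have e1 : ‖T x‖ ^ 2 = ‖(inner ℂ (T x) (T x) : ℂ)‖ := by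
    rw [inner_self_eq_norm_sq_to_K, norm_pow, RCLike.norm_ofReal, abs_norm]
  have e2 : (inner ℂ (T x) (T x) : ℂ)
      = ∑ k ∈ s, (inner ℂ (v k) x : ℂ) * (inner ℂ (T x) (v k) : ℂ) := by
    have e2' := congrArg (fun y => (inner ℂ (T x) y : ℂ)) (hT x)
    rw [inner_sum] at e2'
    rw [e2']
    exact Finset.sum_congr rfl (fun k _ => by rw [inner_smul_right])
  have e3 : ‖T x‖ ^ 2 ≤ ∑ k ∈ s, ‖(inner ℂ (v k) x : ℂ)‖ * ‖(inner ℂ (v k) (T x) : ℂ)‖ := by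
    rw [e1, e2]
    calc ‖∑ k ∈ s, (inner ℂ (v k) x : ℂ) * (inner ℂ (T x) (v k) : ℂ)‖
        ≤ ∑ k ∈ s, ‖(inner ℂ (v k) x : ℂ) * (inner ℂ (T x) (v k) : ℂ)‖ := norm_sum_le _ _
      _ = ∑ k ∈ s, ‖(inner ℂ (v k) x : ℂ)‖ * ‖(inner ℂ (v k) (T x) : ℂ)‖ := by
          refine Finset.sum_congr rfl (fun k _ => ?_)
          rw [norm_mul, norm_inner_symm (T x)]
  have e4 : (∑ k ∈ s, ‖(inner ℂ (v k) x : ℂ)‖ * ‖(inner ℂ (v k) (T x) : ℂ)‖) ^ 2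
      ≤ (C * ‖x‖ * ‖T x‖) ^ 2 := by
    calc (∑ k ∈ s, ‖(inner ℂ (v k) x : ℂ)‖ * ‖(inner ℂ (v k) (T x) : ℂ)‖) ^ 2
        ≤ (∑ k ∈ s, ‖(inner ℂ (v k) x : ℂ)‖ ^ 2) * (∑ k ∈ s, ‖(inner ℂ (v k) (T x) : ℂ)‖ ^ 2) :=
          Finset.sum_mul_sq_le_sq_mul_sq s _ _
      _ ≤ (C * ‖x‖ ^ 2) * (C * ‖T x‖ ^ 2) := by
          apply mul_le_mul (hQ x) (hQ (T x)) (Finset.sum_nonneg fun k _ => sq_nonneg _)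
          positivity
      _ = (C * ‖x‖ * ‖T x‖) ^ 2 := by ring
  have e5 : ∑ k ∈ s, ‖(inner ℂ (v k) x : ℂ)‖ * ‖(inner ℂ (v k) (T x) : ℂ)‖
      ≤ C * ‖x‖ * ‖T x‖ := by
    have hS : 0 ≤ ∑ k ∈ s, ‖(inner ℂ (v k) x : ℂ)‖ * ‖(inner ℂ (v k) (T x) : ℂ)‖ :=
      Finset.sum_nonneg fun k _ => mul_nonneg (norm_nonneg _) (norm_nonneg _)
    have hR : 0 ≤ C * ‖x‖ * ‖T x‖ := by positivity
    nlinarith [e4]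
  have e6 : ‖T x‖ ^ 2 ≤ C * ‖x‖ * ‖T x‖ := le_trans e3 e5
  have := (mul_le_mul_iff_of_pos_right hTxpos).mp (by nlinarith : ‖T x‖ * ‖T x‖ ≤ (C * ‖x‖) * ‖T x‖)
  exact this

/-- **Weakly wandering rank-one projections.** Let `U` be a unitary on a Hilbert space `H`,
`η` a unit vector and `n₁ < n₂ < ⋯` a sequence with `U^{n_i} η ⟂ U^{n_j} η` for `i ≠ j`.
Let `P_η` be the rank-one projection onto `ℂη` and `α(x) = U x U*`. Then the Cesàro
averages `A_n(P_η) = (1/n) Σ_{k<n} α^k(P_η)` satisfy `‖A_n(P_η)‖ → 0`, i.e. `P_η` is a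
weakly wandering projection for the automorphism `α` of `B(H)`. -/
theorem rank_one_projection_weakly_wandering
    {H : Type*} [NormedAddCommGroup H] [InnerProductSpace ℂ H] [CompleteSpace H]
    (U : H →L[ℂ] H) (hU : U ∈ unitary (H →L[ℂ] H))
    (η : H) (hη : ‖η‖ = 1)
    (nseq : ℕ → ℕ) (hmono : StrictMono nseq)
    (horth : ∀ i j : ℕ, i ≠ j →
      (inner ℂ ((U ^ nseq i) η) ((U ^ nseq j) η) : ℂ) = 0) :
    Tendsto (fun n : ℕ =>
        ‖(n : ℝ)⁻¹ • ∑ k ∈ Finset.range n,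
          (U ^ k) * ((innerSL ℂ η).smulRight η) * star (U ^ k)‖)
      atTop (nhds 0) := by
  set v : ℕ → H := fun k => (U ^ k) η with hv
  -- `U^k` preserves inner products
  have hinner : ∀ (k : ℕ) (a b : H), (inner ℂ ((U ^ k) a) ((U ^ k) b) : ℂ) = inner ℂ a b := by
    intro k a b
    have hadj : ContinuousLinearMap.adjoint (U ^ k) ((U ^ k) b) = b := by
      have h1 : star (U ^ k) * (U ^ k) = 1 := (Unitary.mem_iff.mp (pow_mem hU k)).1
      rw [ContinuousLinearMap.star_eq_adjoint] at h1
      calc ContinuousLinearMap.adjoint (U ^ k) ((U ^ k) b)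
          = (ContinuousLinearMap.adjoint (U ^ k) * (U ^ k)) b := rfl
        _ = (1 : H →L[ℂ] H) b := by rw [h1]
        _ = b := rfl
    rw [← ContinuousLinearMap.adjoint_inner_right (U ^ k) a ((U ^ k) b), hadj]
  have hnorm : ∀ k, ‖v k‖ = 1 := by
    intro k
    have h2 : (inner ℂ (v k) (v k) : ℂ) = inner ℂ η η := hinner k η η
    rw [inner_self_eq_norm_sq_to_K, inner_self_eq_norm_sq_to_K] at h2
    have h3 : ‖v k‖ ^ 2 = ‖η‖ ^ 2 := by exact_mod_cast h2
    rw [← Real.sqrt_sq (norm_nonneg (v k)), h3, hη, one_pow, Real.sqrt_one]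
  -- shifted families are orthonormal
  have horthk : ∀ k : ℕ, Orthonormal ℂ (fun i => (U ^ (k + nseq i)) η) := by
    intro k
    constructor
    · intro i; exact hnorm (k + nseq i)
    · intro i j hij
      have hsplit : ∀ i : ℕ, (U ^ (k + nseq i)) η = (U ^ k) ((U ^ nseq i) η) := by
        intro i; rw [pow_add]; rfl
      show (inner ℂ ((U ^ (k + nseq i)) η) ((U ^ (k + nseq j)) η) : ℂ) = 0
      rw [hsplit i, hsplit j, hinner k]
      exact horth i j hij
  -- Bessel with shifted windows
  have hbessel : ∀ (x : H) (k m : ℕ),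
      ∑ i ∈ Finset.range (m + 1), ‖(inner ℂ (v (k + nseq i)) x : ℂ)‖ ^ 2 ≤ ‖x‖ ^ 2 := by
    intro x k m
    exact (horthk k).sum_inner_products_le x
  -- quadratic form bound
  have hquad : ∀ (x : H) (n m : ℕ),
      ∑ j ∈ Finset.range n, ‖(inner ℂ (v j) x : ℂ)‖ ^ 2
        ≤ ((nseq m : ℝ) + (n : ℝ) / (m + 1)) * ‖x‖ ^ 2 := by
    intro x n m
    have hpt : ∀ j, ‖(inner ℂ (v j) x : ℂ)‖ ^ 2 ≤ ‖x‖ ^ 2 := by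
      intro j
      have h1 : ‖(inner ℂ (v j) x : ℂ)‖ ≤ ‖v j‖ * ‖x‖ := norm_inner_le_norm _ _
      rw [hnorm j, one_mul] at h1
      exact pow_le_pow_left₀ (norm_nonneg _) h1 2
    have := aux_sum_window (fun j => ‖(inner ℂ (v j) x : ℂ)‖ ^ 2) (‖x‖ ^ 2) nseq
      hmono.monotone m n (fun j => sq_nonneg _) hpt (fun k => hbessel x k m)
    calc ∑ j ∈ Finset.range n, ‖(inner ℂ (v j) x : ℂ)‖ ^ 2
        ≤ (nseq m : ℝ) * ‖x‖ ^ 2 + ((n : ℝ) / (m + 1)) * ‖x‖ ^ 2 := this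
      _ = ((nseq m : ℝ) + (n : ℝ) / (m + 1)) * ‖x‖ ^ 2 := by ring
  -- the operator applied to a vector
  have hTapp : ∀ (n : ℕ) (x : H),
      (∑ k ∈ Finset.range n, (U ^ k) * ((innerSL ℂ η).smulRight η) * star (U ^ k)) x
        = ∑ k ∈ Finset.range n, (inner ℂ (v k) x : ℂ) • v k := by
    intro n x
    rw [ContinuousLinearMap.sum_apply]
    refine Finset.sum_congr rfl (fun k _ => ?_)
    rw [ContinuousLinearMap.mul_apply, ContinuousLinearMap.mul_apply,
      ContinuousLinearMap.star_eq_adjoint, ContinuousLinearMap.smulRight_apply,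
      innerSL_apply_apply, map_smul]
    congr 1
    exact ContinuousLinearMap.adjoint_inner_right (U ^ k) η x
  -- operator norm bound
  have hTnorm : ∀ n m : ℕ,
      ‖∑ k ∈ Finset.range n, (U ^ k) * ((innerSL ℂ η).smulRight η) * star (U ^ k)‖
        ≤ (nseq m : ℝ) + (n : ℝ) / (m + 1) := by
    intro n m
    refine aux_opNorm_le (Finset.range n) v _ (hTapp n) _ (by positivity)
      (fun x => hquad x n m)
  -- final bound on the Cesàro average
  have hbound : ∀ m n : ℕ, 1 ≤ n →
      ‖(n : ℝ)⁻¹ • ∑ k ∈ Finset.range n,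
          (U ^ k) * ((innerSL ℂ η).smulRight η) * star (U ^ k)‖
        ≤ (nseq m : ℝ) / n + 1 / (m + 1) := by
    intro m n hn
    have hnpos : (0 : ℝ) < n := by exact_mod_cast hn
    rw [norm_smul, Real.norm_eq_abs, abs_of_nonneg (by positivity)]
    calc (n : ℝ)⁻¹ * ‖∑ k ∈ Finset.range n,
            (U ^ k) * ((innerSL ℂ η).smulRight η) * star (U ^ k)‖
        ≤ (n : ℝ)⁻¹ * ((nseq m : ℝ) + (n : ℝ) / (m + 1)) := by
          exact mul_le_mul_of_nonneg_left (hTnorm n m) (by positivity)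
      _ = (nseq m : ℝ) / n + 1 / (m + 1) := by
          field_simp
  -- conclude via ε-argument
  rw [Metric.tendsto_atTop]
  intro ε hε
  obtain ⟨m, hm⟩ : ∃ m : ℕ, 1 / ((m : ℝ) + 1) < ε / 2 :=
    exists_nat_one_div_lt (by linarith)
  set N : ℕ := max 1 (⌈(nseq m : ℝ) / (ε / 2)⌉₊ + 1) with hN
  refine ⟨N, fun n hn => ?_⟩
  have hn1 : 1 ≤ n := le_trans (le_max_left _ _) hn
  have hnpos : (0 : ℝ) < n := by exact_mod_cast hn1
  have hceil : (⌈(nseq m : ℝ) / (ε / 2)⌉₊ : ℝ) < n := by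
    have : ⌈(nseq m : ℝ) / (ε / 2)⌉₊ + 1 ≤ n := le_trans (le_max_right _ _) hn
    exact_mod_cast Nat.lt_of_lt_of_le (Nat.lt_succ_self _) this
  have hsmall : (nseq m : ℝ) / n < ε / 2 := by
    have h1 : (nseq m : ℝ) / (ε / 2) < n := lt_of_le_of_lt (Nat.le_ceil _) hceil
    rw [div_lt_iff₀ hnpos]
    rw [div_lt_iff₀ (by linarith : (0 : ℝ) < ε / 2)] at h1
    linarith
  rw [Real.dist_eq, sub_zero, abs_of_nonneg (norm_nonneg _)]
  calc ‖(n : ℝ)⁻¹ • ∑ k ∈ Finset.range n,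
          (U ^ k) * ((innerSL ℂ η).smulRight η) * star (U ^ k)‖
      ≤ (nseq m : ℝ) / n + 1 / (m + 1) := hbound m n hn1
    _ < ε / 2 + ε / 2 := by linarith
    _ = ε := by ring
end
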